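/- arXiv:2506.08025 — 8 statements merged into one kernel-verified Lean document; each statement's English description precedes it below -/
import Mathlib

section
/- Let H ∈ (1/2, 1), q > 0, r > 0, b₁ ∈ ℝ and b₂ ≠ 0. The quadratic equation (1-H)·b₂·K² + b₁·K - H·b₂·q/r = 0 has exactly two real roots; exactly one of them, namely K̂ = -(b₁ + √(b₁² + 4H(1-H)·b₂²·q/r)) / (2·b₂·(1-H)), satisfies the stability condition b₁ + b₂ K < 0, while the other root K' satisfies b₁ + b₂ K' > 0. Hence a real number K solves the quadratic together with b₁ + b₂ K < 0 if and only if K = K̂. -/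
/-- The first-order optimality quadratic `(1-H)·b₂·K² + b₁·K - H·b₂·q/r = 0` of the
Rosenblatt ergodic control problem has exactly two real roots; exactly one of them,
namely `Khat`, is stabilizing (`b₁ + b₂K < 0`), the other is anti-stable, and a real
number solves the quadratic together with the stability condition iff it equals `Khat`. -/
theorem stmt_1 (H q r b₁ b₂ : ℝ)
    (hH : 1/2 < H) (hH1 : H < 1) (hq : 0 < q) (hr : 0 < r) (hb₂ : b₂ ≠ 0) :
    let f : ℝ → ℝ := fun K => (1-H) * b₂ * K^2 + b₁ * K - H * b₂ * q / r;
    let Khat : ℝ := -(b₁ + Real.sqrt (b₁^2 + 4*H*(1-H) * b₂^2 * q / r)) / (2 * b₂ * (1-H));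
    f Khat = 0 ∧ b₁ + b₂ * Khat < 0 ∧
    (∃ K' : ℝ, K' ≠ Khat ∧ f K' = 0 ∧ b₁ + b₂ * K' > 0 ∧
      (∀ K : ℝ, f K = 0 → K = Khat ∨ K = K')) ∧
    (∀ K : ℝ, (f K = 0 ∧ b₁ + b₂ * K < 0) ↔ K = Khat) := by
  intro f Khat
  have h1H : 0 < 1 - H := by linarith
  have hb2sq : 0 < b₂^2 := by positivity
  have hDpos : 0 < b₁^2 + 4*H*(1-H) * b₂^2 * q / r := by
    have h1 : 0 < 4*H*(1-H) * b₂^2 * q / r := by positivity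
    nlinarith [sq_nonneg b₁]
  set s := Real.sqrt (b₁^2 + 4*H*(1-H) * b₂^2 * q / r) with hsdef
  have hs2 : s^2 = b₁^2 + 4*H*(1-H) * b₂^2 * q / r := Real.sq_sqrt hDpos.le
  have hspos : 0 < s := Real.sqrt_pos.mpr hDpos
  have hpos : 0 < 4*H*(1-H) * b₂^2 * q / r := by positivity
  have hfac : (1-(1-2*H)^2) * b₁^2 ≥ 0 := mul_nonneg (by nlinarith) (sq_nonneg b₁)
  have hlt : ((1-2*H)*b₁)^2 < s^2 := by nlinarith
  have hkey1 : (1-2*H)*b₁ - s < 0 := by nlinarith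
  have hkey2 : (1-2*H)*b₁ + s > 0 := by nlinarith
  set K' : ℝ := (-b₁ + s) / (2 * b₂ * (1-H)) with hK'def
  have hden : 2 * b₂ * (1-H) ≠ 0 := by positivity
  have hKhat : Khat = -(b₁ + s) / (2 * b₂ * (1-H)) := rfl
  have hbKhat : b₁ + b₂ * Khat = ((1-2*H)*b₁ - s) / (2 * (1-H)) := by
    rw [hKhat]; field_simp; ring
  have hbK' : b₁ + b₂ * K' = ((1-2*H)*b₁ + s) / (2 * (1-H)) := by
    rw [hK'def]; field_simp; ring
  have hstab : b₁ + b₂ * Khat < 0 := by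
    rw [hbKhat]; exact div_neg_of_neg_of_pos hkey1 (by linarith)
  have hanti : b₁ + b₂ * K' > 0 := by
    rw [hbK']; exact div_pos hkey2 (by linarith)
  have hfact : ∀ K : ℝ, f K = (1-H) * b₂ * (K - Khat) * (K - K') := by
    intro K
    show (1-H) * b₂ * K^2 + b₁ * K - H * b₂ * q / r = _
    rw [hKhat, hK'def]
    have hr' : r ≠ 0 := ne_of_gt hr
    have hs2' : s^2*r = b₁^2*r + 4*H*(1-H) * b₂^2 * q := by
      field_simp at hs2; linarith
    field_simp
    linear_combination hs2'
  have hroot : ∀ K : ℝ, f K = 0 → K = Khat ∨ K = K' := by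
    intro K hK
    rw [hfact K] at hK
    have h2 : b₂ * (1-H) ≠ 0 := by positivity
    rcases mul_eq_zero.mp hK with h | h
    · rcases mul_eq_zero.mp h with h' | h'
      · exact absurd h' (by positivity)
      · left; linarith [sub_eq_zero.mp h']
    · right; linarith [sub_eq_zero.mp h]
  have hfKhat : f Khat = 0 := by rw [hfact, sub_self, mul_zero, zero_mul]
  have hfK' : f K' = 0 := by rw [hfact, sub_self, mul_zero]
  refine ⟨hfKhat, hstab, ⟨K', ?_, hfK', hanti, hroot⟩, ?_⟩
  · intro h; rw [h] at hanti; linarith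
  · intro K
    constructor
    · rintro ⟨hK, hKs⟩
      rcases hroot K hK with h | h
      · exact h
      · rw [h] at hKs; linarith
    · rintro rfl; exact ⟨hfKhat, hstab⟩
end

section
/- Let b̄₀ ∈ ℝ, q̄ > 0, r̄ > 0, and let c = b₁ + b̄₁ < 0 and d = b₂ + b̄₂ ≠ 0. Define M(K̄) = b̄₀²·(q̄ + r̄·K̄²) / (c + d·K̄)² on the stabilizing set {K̄ ∈ ℝ : c + d·K̄ < 0}. Then K̄* = d·q̄/(r̄·c) (i.e. K̄* = (b₂ + b̄₂)·q̄ / (r̄·(b₁ + b̄₁))) satisfies c + d·K̄* < 0 and is a global minimizer of M over the stabilizing set, with minimal value M(K̄*) = b̄₀²·q̄·r̄ / (c²·r̄ + d²·q̄). -/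
/-- The mean part of the variance-aware ergodic control problem: with `c = b₁ + b̄₁ < 0`
and `d = b₂ + b̄₂ ≠ 0`, the gain `K̄* = d·q̄/(r̄·c)` is stabilizing and globally minimizes
`M(K̄) = b̄₀²·(q̄ + r̄·K̄²)/(c + d·K̄)²` over the stabilizing set, with minimal value
`b̄₀²·q̄·r̄/(c²·r̄ + d²·q̄)`. -/
theorem stmt_6 (b₀' q' r' b₁ b₁' b₂ b₂' : ℝ)
    (hq : 0 < q') (hr : 0 < r')
    (hc : b₁ + b₁' < 0) (hd : b₂ + b₂' ≠ 0) :
    let c : ℝ := b₁ + b₁';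
    let d : ℝ := b₂ + b₂';
    let M : ℝ → ℝ := fun K => b₀'^2 * (q' + r' * K^2) / (c + d * K)^2;
    let Kstar : ℝ := d * q' / (r' * c);
    c + d * Kstar < 0 ∧
    (∀ K : ℝ, c + d * K < 0 → M Kstar ≤ M K) ∧
    M Kstar = b₀'^2 * q' * r' / (c^2 * r' + d^2 * q') := by
  intro c d M Kstar
  have hc' : c < 0 := hc
  have hd' : d ≠ 0 := hd
  have hc0 : c ≠ 0 := ne_of_lt hc'
  have hrc : r' * c < 0 := mul_neg_of_pos_of_neg hr hc'
  have hrc0 : r' * c ≠ 0 := ne_of_lt hrc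
  have hden : 0 < c ^ 2 * r' + d ^ 2 * q' := by positivity
  have hKs : c + d * Kstar = (c ^ 2 * r' + d ^ 2 * q') / (r' * c) := by
    show c + d * (d * q' / (r' * c)) = _
    field_simp
  have h1 : c + d * Kstar < 0 := by
    rw [hKs]; exact div_neg_of_pos_of_neg hden hrc
  have hne : c + d * Kstar ≠ 0 := ne_of_lt h1
  have hMK : M Kstar = b₀' ^ 2 * q' * r' / (c ^ 2 * r' + d ^ 2 * q') := by
    show b₀' ^ 2 * (q' + r' * Kstar ^ 2) / (c + d * Kstar) ^ 2 = _
    rw [hKs]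
    show b₀' ^ 2 * (q' + r' * (d * q' / (r' * c)) ^ 2) / _ = _
    field_simp
  refine ⟨h1, ?_, hMK⟩
  intro K hK
  rw [hMK]
  have hKne : c + d * K ≠ 0 := ne_of_lt hK
  have hK2 : (0:ℝ) < (c + d * K) ^ 2 := by positivity
  show _ ≤ b₀' ^ 2 * (q' + r' * K ^ 2) / (c + d * K) ^ 2
  rw [div_le_div_iff₀ hden hK2]
  nlinarith [mul_nonneg (sq_nonneg b₀') (sq_nonneg (q' * d - r' * c * K))]
end

section
/- Let H ∈ (1/2, 1), q, r, q̄, r̄ > 0, b₁ ∈ ℝ, b₂ ≠ 0, b̄₀ ∈ ℝ, b₁ + b̄₁ < 0 and b₂ + b̄₂ ≠ 0. Define J(K, K̄) = Γ(2H+1)·(q + r K²)/(2·(-(b₁ + b₂ K))^{2H}) + b̄₀²·(q̄ + r̄·K̄²)/((b₁ + b̄₁) + (b₂ + b̄₂)·K̄)² on the admissible set {(K, K̄) : b₁ + b₂ K < 0 and (b₁ + b̄₁) + (b₂ + b̄₂)·K̄ < 0}. Then the pair K* = -(b₁ + √(b₁² + 4H(1-H)·b₂²·q/r))/(2·b₂·(1-H))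 and K̄* = (b₂ + b̄₂)·q̄/(r̄·(b₁ + b̄₁)) is admissible and is a global minimizer of J, with optimal value J(K*, K̄*) = Γ(2H+1)·(q + r(K*)²)/(2·(-(b₁ + b₂ K*))^{2H}) + b̄₀²·q̄·r̄ / ((b₁ + b̄₁)²·r̄ + (b₂ + b̄₂)²·q̄). -/
lemma rosen_key (H a β γ M t : ℝ) (hH : 1/2 < H) (hH1 : H < 1) (ha : 0 < a) (hγ : 0 < γ)
    (hM : 0 < M) (hsum : a + β + γ = M) (hcrit : β + 2*γ = 2*H*M) (ht : 0 < t) :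
    M * t ^ (2*H) ≤ a + β*t + γ*t^2 := by
  have h2 : (t:ℝ)^2 = t ^ ((2:ℝ)) := by
    rw [← Real.rpow_natCast t 2]; norm_num
  rcases le_or_gt 0 β with hβ | hβ
  · have hw : a/M + β/M + γ/M = 1 := by field_simp; linarith
    have key := Real.geom_mean_le_arith_mean3_weighted
      (le_of_lt (div_pos ha hM)) (div_nonneg hβ hM.le) (le_of_lt (div_pos hγ hM))
      zero_le_one ht.le (sq_nonneg t) hw
    have hgeom : (1:ℝ) ^ (a/M) * t ^ (β/M) * (t^2) ^ (γ/M) = t ^ (2*H) := by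
      rw [Real.one_rpow, one_mul, h2, ← Real.rpow_mul ht.le, ← Real.rpow_add ht]
      congr 1
      field_simp
      linarith
    rw [hgeom] at key
    have := mul_le_mul_of_nonneg_left key hM.le
    calc M * t ^ (2*H) ≤ M * (a/M * 1 + β/M * t + γ/M * (t^2)) := this
      _ = a + β*t + γ*t^2 := by field_simp
  · have h1 : a + β*t + γ*t^2 ≥ (1-H)*M + H*M*t^2 := by nlinarith [sq_nonneg (t-1)]
    have key := Real.geom_mean_le_arith_mean2_weighted
      (by linarith : (0:ℝ) ≤ 1-H) (by linarith : (0:ℝ) ≤ H)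
      zero_le_one (sq_nonneg t) (by ring)
    have hgeom : (1:ℝ) ^ (1-H) * (t^2) ^ H = t ^ (2*H) := by
      rw [Real.one_rpow, one_mul, h2, ← Real.rpow_mul ht.le, mul_comm]
    rw [hgeom] at key
    nlinarith [mul_le_mul_of_nonneg_left key hM.le]

lemma rosen_var (H q r b₁ b₂ sstar s : ℝ) (hH : 1/2 < H) (hH1 : H < 1) (hq : 0 < q) (hr : 0 < r)
    (hb₂ : b₂ ≠ 0) (hss : 0 < sstar) (hs : 0 < s)
    (hcrit : r * sstar * (sstar + b₁) = H * (q*b₂^2 + r*(sstar+b₁)^2)) :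
    (q*b₂^2 + r*(sstar+b₁)^2) * s ^ (2*H) ≤ (q*b₂^2 + r*(s+b₁)^2) * sstar ^ (2*H) := by
  have hM : (0:ℝ) < q*b₂^2 + r*(sstar+b₁)^2 := by positivity
  have key := rosen_key H (q*b₂^2+r*b₁^2) (2*r*b₁*sstar) (r*sstar^2)
      (q*b₂^2+r*(sstar+b₁)^2) (s/sstar) hH hH1 (by positivity) (by positivity) hM
      (by ring) (by linear_combination 2*hcrit) (div_pos hs hss)
  have hdiv : (s/sstar) ^ (2*H) = s ^ (2*H) / sstar ^ (2*H) :=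
    Real.div_rpow hs.le hss.le (2*H)
  have hrhs : q*b₂^2+r*b₁^2 + 2*r*b₁*sstar*(s/sstar) + r*sstar^2*(s/sstar)^2
      = q*b₂^2 + r*(s+b₁)^2 := by
    field_simp
    ring
  rw [hdiv, hrhs] at key
  have hpow : (0:ℝ) < sstar ^ (2*H) := Real.rpow_pos_of_pos hss _
  calc (q*b₂^2 + r*(sstar+b₁)^2) * s ^ (2*H)
      = ((q*b₂^2 + r*(sstar+b₁)^2) * (s ^ (2*H) / sstar ^ (2*H))) * sstar ^ (2*H) := by
        field_simp
    _ ≤ (q*b₂^2 + r*(s+b₁)^2) * sstar ^ (2*H) := mul_le_mul_of_nonneg_right key hpow.le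


set_option maxHeartbeats 1600000 in
/-- Variance-aware mean-field-type ergodic control under Rosenblatt noise: the pair
`(K*, K̄*)` is admissible and globally minimizes the total cost
`J(K,K̄) = Γ(2H+1)·(q+rK²)/(2(-(b₁+b₂K))^{2H}) + b̄₀²·(q̄+r̄K̄²)/((b₁+b̄₁)+(b₂+b̄₂)K̄)²`
over the admissible set, with the stated optimal value. -/
theorem stmt_7 (H q r q' r' b₁ b₂ b₀' b₁' b₂' : ℝ)
    (hH : 1/2 < H) (hH1 : H < 1) (hq : 0 < q) (hr : 0 < r)
    (hq' : 0 < q') (hr' : 0 < r') (hb₂ : b₂ ≠ 0)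
    (hc : b₁ + b₁' < 0) (hd : b₂ + b₂' ≠ 0) :
    let J : ℝ → ℝ → ℝ := fun K K' =>
      Real.Gamma (2*H + 1) * (q + r * K^2) / (2 * (-(b₁ + b₂ * K)) ^ (2*H)) +
        b₀'^2 * (q' + r' * K'^2) / ((b₁ + b₁') + (b₂ + b₂') * K')^2;
    let Kstar : ℝ := -(b₁ + Real.sqrt (b₁^2 + 4*H*(1-H) * b₂^2 * q / r)) / (2 * b₂ * (1-H));
    let Kbarstar : ℝ := (b₂ + b₂') * q' / (r' * (b₁ + b₁'));
    (b₁ + b₂ * Kstar < 0 ∧ (b₁ + b₁') + (b₂ + b₂') * Kbarstar < 0) ∧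
    (∀ K K' : ℝ, b₁ + b₂ * K < 0 → (b₁ + b₁') + (b₂ + b₂') * K' < 0 →
      J Kstar Kbarstar ≤ J K K') ∧
    J Kstar Kbarstar =
      Real.Gamma (2*H + 1) * (q + r * Kstar^2) / (2 * (-(b₁ + b₂ * Kstar)) ^ (2*H)) +
        b₀'^2 * q' * r' / ((b₁ + b₁')^2 * r' + (b₂ + b₂')^2 * q') := by
  intro J Kstar Kbarstar
  have h1H : (0:ℝ) < 1 - H := by linarith
  have h2H : (0:ℝ) < 2*H - 1 := by linarith
  have hJ : ∀ K K' : ℝ, J K K' =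
      Real.Gamma (2*H + 1) * (q + r * K^2) / (2 * (-(b₁ + b₂ * K)) ^ (2*H)) +
        b₀'^2 * (q' + r' * K'^2) / ((b₁ + b₁') + (b₂ + b₂') * K')^2 := fun _ _ => rfl
  set S : ℝ := Real.sqrt (b₁^2 + 4*H*(1-H) * b₂^2 * q / r) with hSdef
  have hE : (0:ℝ) < 4*H*(1-H) * b₂^2 * q / r := by positivity
  have hD : (0:ℝ) < b₁^2 + 4*H*(1-H) * b₂^2 * q / r := by positivity
  have hS2 : S^2 = b₁^2 + 4*H*(1-H) * b₂^2 * q / r := Real.sq_sqrt hD.le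
  have hSnn : 0 ≤ S := Real.sqrt_nonneg _
  have hb2K : b₂ * Kstar = -(b₁ + S)/(2*(1-H)) := by
    show b₂ * (-(b₁ + S) / (2 * b₂ * (1-H))) = _
    field_simp
  have hKbar : Kbarstar = (b₂+b₂') * q' / (r' * (b₁+b₁')) := rfl
  clear_value J Kstar Kbarstar S
  clear hSdef
  have habs : |b₁| < S := by
    nlinarith [sq_abs b₁, abs_nonneg b₁]
  have hnum : b₁*(1-2*H) - S < 0 := by
    nlinarith [le_abs_self b₁, neg_abs_le b₁, abs_nonneg b₁]
  have hKeq : b₁ + b₂ * Kstar = (b₁*(1-2*H) - S)/(2*(1-H)) := by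
    rw [show b₁ + b₂ * Kstar = b₁ + (b₂ * Kstar) from rfl, hb2K]; field_simp; ring
  have hKadm : b₁ + b₂ * Kstar < 0 := by
    rw [hKeq]; exact div_neg_of_neg_of_pos hnum (by linarith)
  -- mean part admissibility
  have hc0 : b₁ + b₁' ≠ 0 := ne_of_lt hc
  have hden : (0:ℝ) < (b₁+b₁')^2*r' + (b₂+b₂')^2*q' := by
    have h1 : (0:ℝ) < (b₂+b₂')^2*q' := by positivity
    nlinarith [sq_nonneg (b₁+b₁')]
  have hKb : (b₁+b₁') + (b₂+b₂') * Kbarstar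
      = ((b₁+b₁')^2*r' + (b₂+b₂')^2*q')/(r'*(b₁+b₁')) := by
    rw [hKbar]
    field_simp
  have hKbadm : (b₁+b₁') + (b₂+b₂') * Kbarstar < 0 := by
    rw [hKb]; exact div_neg_of_pos_of_neg hden (mul_neg_of_pos_of_neg hr' hc)
  -- critical equation
  set sstar : ℝ := -(b₁ + b₂ * Kstar) with hssdef
  have hsspos : 0 < sstar := by rw [hssdef]; linarith [hKadm]
  have hsb : sstar + b₁ = (b₁ + S)/(2*(1-H)) := by
    rw [hssdef, hb2K]; field_simp; ring
  have hss2 : sstar = (b₁*(2*H-1) + S)/(2*(1-H)) := by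
    rw [hssdef, hKeq]; field_simp; ring
  clear_value sstar
  clear hssdef
  have hcrit : r * sstar * (sstar + b₁) = H * (q*b₂^2 + r*(sstar+b₁)^2) := by
    have hA : 2*(1-H)*sstar = b₁*(2*H-1) + S := by
      rw [hss2]; field_simp
    have hB : 2*(1-H)*(sstar+b₁) = b₁ + S := by
      rw [hsb]; field_simp
    have hclear : (2*(1-H))^2 * (r * sstar * (sstar + b₁) - H * (q*b₂^2 + r*(sstar+b₁)^2))
        = 0 := by
      have expand : (2*(1-H))^2 * (r * sstar * (sstar + b₁) - H * (q*b₂^2 + r*(sstar+b₁)^2))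
          = r * (2*(1-H)*sstar) * (2*(1-H)*(sstar+b₁))
            - H * (q*b₂^2*(2*(1-H))^2 + r*(2*(1-H)*(sstar+b₁))^2) := by ring
      rw [expand, hA, hB]
      have hS2' : r * S^2 = r * b₁^2 + 4*H*(1-H)*b₂^2*q := by
        rw [hS2]; field_simp
      linear_combination (1-H) * hS2'
    have h4 : ((2:ℝ)*(1-H))^2 ≠ 0 := by positivity
    have := mul_eq_zero.mp hclear
    rcases this with h | h
    · exact absurd h h4
    · linarith
  -- value of second part
  have hT2 : b₀'^2 * (q' + r' * Kbarstar^2) / ((b₁+b₁') + (b₂+b₂') * Kbarstar)^2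
      = b₀'^2 * q' * r' / ((b₁+b₁')^2*r' + (b₂+b₂')^2*q') := by
    rw [hKb, hKbar]
    field_simp
  have hGamma : 0 < Real.Gamma (2*H+1) := Real.Gamma_pos_of_pos (by linarith)
  refine ⟨⟨hKadm, hKbadm⟩, ?_, ?_⟩
  · intro K K' hK hK'
    rw [hJ, hJ]
    have hs : (0:ℝ) < -(b₁ + b₂ * K) := by linarith
    have hvar := rosen_var H q r b₁ b₂ sstar (-(b₁ + b₂*K)) hH hH1 hq hr hb₂ hsspos hs hcrit
    have hsb1 : sstar + b₁ = -(b₂ * Kstar) := by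
      have : sstar = -(b₁ + b₂*Kstar) := by
        rw [hss2, hKeq]; field_simp; ring
      rw [this]; ring
    have hsb2 : -(b₁ + b₂*K) + b₁ = -(b₂ * K) := by ring
    rw [hsb1, hsb2] at hvar
    have hvar2 : (q + r * Kstar^2) * (-(b₁ + b₂*K)) ^ (2*H)
        ≤ (q + r * K^2) * sstar ^ (2*H) := by
      have hb2sq : (0:ℝ) < b₂^2 := by positivity
      have e1 : q*b₂^2 + r*(-(b₂*Kstar))^2 = b₂^2 * (q + r*Kstar^2) := by ring
      have e2 : q*b₂^2 + r*(-(b₂*K))^2 = b₂^2 * (q + r*K^2) := by ring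
      rw [e1, e2, mul_assoc, mul_assoc] at hvar
      exact le_of_mul_le_mul_left hvar hb2sq
    have hp1 : (0:ℝ) < (-(b₁ + b₂ * K)) ^ (2*H) := Real.rpow_pos_of_pos hs _
    have hp2 : (0:ℝ) < (-(b₁ + b₂ * Kstar)) ^ (2*H) := by
      have : -(b₁ + b₂ * Kstar) = sstar := by
        rw [hss2, hKeq]; field_simp; ring
      rw [this]; exact Real.rpow_pos_of_pos hsspos _
    have hsseq : -(b₁ + b₂ * Kstar) = sstar := by
      rw [hss2, hKeq]; field_simp; ring
    have hT1le : Real.Gamma (2*H + 1) * (q + r * Kstar^2) / (2 * (-(b₁ + b₂ * Kstar)) ^ (2*H))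
        ≤ Real.Gamma (2*H + 1) * (q + r * K^2) / (2 * (-(b₁ + b₂ * K)) ^ (2*H)) := by
      rw [hsseq]
      have hp2' : (0:ℝ) < sstar ^ (2*H) := Real.rpow_pos_of_pos hsspos _
      rw [div_le_div_iff₀ (by positivity) (by positivity)]
      have h := mul_le_mul_of_nonneg_left hvar2 (by positivity : (0:ℝ) ≤ 2 * Real.Gamma (2*H+1))
      linarith [h]
    have hT2le : b₀'^2 * (q' + r' * Kbarstar^2) / ((b₁+b₁') + (b₂+b₂') * Kbarstar)^2
        ≤ b₀'^2 * (q' + r' * K'^2) / ((b₁+b₁') + (b₂+b₂') * K')^2 := by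
      rw [hT2]
      have hp3 : (0:ℝ) < ((b₁+b₁') + (b₂+b₂')*K')^2 :=
        pow_two_pos_of_ne_zero (ne_of_lt hK')
      rw [div_le_div_iff₀ hden hp3]
      have key : b₀'^2 * (q' + r' * K'^2) * ((b₁+b₁')^2*r' + (b₂+b₂')^2*q')
          - b₀'^2 * q' * r' * ((b₁+b₁') + (b₂+b₂')*K')^2
          = (b₀' * (q'*(b₂+b₂') - r'*(b₁+b₁')*K'))^2 := by ring
      linarith [sq_nonneg (b₀' * (q'*(b₂+b₂') - r'*(b₁+b₁')*K')), key]
    exact add_le_add hT1le hT2le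
  · rw [hJ, hT2, show -(b₁ + b₂ * Kstar) = sstar by rw [hss2, hKeq]; field_simp; ring]
end

section
/- Let I be a finite index set, H ∈ (1/2, 1), b₁ ∈ ℝ, and for each i ∈ I let b_{2i} ≠ 0, q_i > 0 and r_i > 0. Suppose (K_i)_{i∈I} are real numbers such that b₁ + Σ_{j∈I} b_{2j} K_j < 0 and, for every i ∈ I, K_i = -(a_i + √(a_i² + 4H(1-H)·b_{2i}²·q_i/r_i)) / (2·b_{2i}·(1-H)), where a_i = b₁ + Σ_{j∈I, j≠i} b_{2j} K_j. Then for every i ∈ I, K_i is a global minimizer of the function K ↦ Γ(2H+1)·(q_i + r_i K²) / (2·(-(a_i + b_{2i} K))^{2H}) over {K ∈ ℝ : a_i + b_{2i} K < 0}; that is, (K_i)_{i∈I} is a Nash equilibrium in stationary linear state-feedback strategies. -/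
open Finset

/-- Nash equilibrium of the non-zero-sum ergodic game driven by a Rosenblatt process:
if the gains `K i` satisfy the stated fixed-point system and the closed loop is stable,
then each `K i` globally minimizes agent `i`'s ergodic cost
`Γ(2H+1)·(qᵢ + rᵢK²)/(2(-(aᵢ + b₂ᵢK))^{2H})` over `{K : aᵢ + b₂ᵢK < 0}`, where
`aᵢ = b₁ + Σ_{j≠i} b₂ⱼKⱼ`; i.e. `(K i)` is a Nash equilibrium in stationary linear
state-feedback strategies. -/
theorem stmt_9 {I : Type*} [Fintype I] [DecidableEq I]
    (H b₁ : ℝ) (b₂ q r K : I → ℝ)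
    (hH : 1/2 < H) (hH1 : H < 1)
    (hb₂ : ∀ i, b₂ i ≠ 0) (hq : ∀ i, 0 < q i) (hr : ∀ i, 0 < r i)
    (hstab : b₁ + ∑ j, b₂ j * K j < 0)
    (hfix : ∀ i, K i =
      -((b₁ + ∑ j ∈ univ.erase i, b₂ j * K j) +
          Real.sqrt ((b₁ + ∑ j ∈ univ.erase i, b₂ j * K j)^2 +
            4*H*(1-H) * (b₂ i)^2 * q i / r i)) / (2 * b₂ i * (1-H))) :
    ∀ i, ∀ K' : ℝ,
      (b₁ + ∑ j ∈ univ.erase i, b₂ j * K j) + b₂ i * K' < 0 →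
      Real.Gamma (2*H + 1) * (q i + r i * (K i)^2) /
          (2 * (-((b₁ + ∑ j ∈ univ.erase i, b₂ j * K j) + b₂ i * K i)) ^ (2*H)) ≤
        Real.Gamma (2*H + 1) * (q i + r i * K'^2) /
          (2 * (-((b₁ + ∑ j ∈ univ.erase i, b₂ j * K j) + b₂ i * K')) ^ (2*H)) := by
  intro i K' hK'
  set a : ℝ := b₁ + ∑ j ∈ univ.erase i, b₂ j * K j with ha
  set b : ℝ := b₂ i with hb
  have hb0 : b ≠ 0 := hb₂ i
  have hb2 : (0:ℝ) < b^2 := by positivity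
  have hqi := hq i
  have hri := hr i
  have hHe : (0:ℝ) < 1 - H := by linarith
  have hH2 : (0:ℝ) < 2*H - 1 := by linarith
  set s : ℝ := Real.sqrt (a^2 + 4*H*(1-H) * b^2 * q i / r i) with hs
  have hD : (0:ℝ) ≤ a^2 + 4*H*(1-H) * b^2 * q i / r i := by positivity
  have hs2 : s^2 = a^2 + 4*H*(1-H) * b^2 * q i / r i := Real.sq_sqrt hD
  have hs0 : (0:ℝ) ≤ s := Real.sqrt_nonneg _
  have hsabs : |a| ≤ s := by
    rw [hs, ← Real.sqrt_sq_eq_abs]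
    apply Real.sqrt_le_sqrt
    have : (0:ℝ) < 4*H*(1-H) * b^2 * q i / r i := by positivity
    linarith
  have hsge : (2*H-1)*a ≤ s := by
    rcases le_or_gt a 0 with h | h
    · nlinarith
    · nlinarith [le_abs_self a]
  set x₀ : ℝ := -(a + b * K i) with hx₀def
  set x : ℝ := -(a + b * K') with hxdef
  have hx : 0 < x := by simp only [hxdef]; linarith
  have hx₀ : 0 < x₀ := by
    have hsum : ∑ j ∈ univ.erase i, b₂ j * K j + b₂ i * K i = ∑ j, b₂ j * K j :=
      Finset.sum_erase_add univ _ (mem_univ i)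
    simp only [hx₀def, ha, ← hb]
    nlinarith [hstab]
  have hKi : K i = -(a + s) / (2 * b * (1 - H)) := hfix i
  have hbK : b * K i = -(a + s)/(2*(1-H)) := by
    rw [hKi]
    field_simp
  have hx₀eq : 2*(1-H)*x₀ = s + (2*H-1)*a := by
    rw [hx₀def, hbK]
    field_simp
    ring
  have hrs : r i * s^2 = r i * a^2 + 4*H*(1-H)*b^2*(q i) := by
    rw [hs2]
    field_simp
  -- first-order condition at x₀
  have G4 : 4*(1-H) * (r i * x₀^2 + r i * a * x₀
      - H * (q i * b^2 + r i * (a + x₀)^2)) = 0 := by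
    linear_combination hrs + (r i*(2*(1-H)*x₀ + s + (2*H-1)*a)
      - 2*(2*H-1)*(r i)*a) * hx₀eq
  have foc : r i * x₀^2 + r i * a * x₀
      - H * (q i * b^2 + r i * (a + x₀)^2) = 0 :=
    (mul_eq_zero.mp G4).resolve_left (ne_of_gt (by linarith : (0:ℝ) < 4*(1-H)))
  set N₀ : ℝ := q i * b^2 + r i * (a + x₀)^2 with hN₀
  set Nx : ℝ := q i * b^2 + r i * (a + x)^2 with hNx
  have hN₀pos : 0 < N₀ := by positivity
  -- nonnegative leading coefficient
  have hA : 0 ≤ r i * x₀^2 - (2*H-1) * N₀ := by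
    have h5 : (2*H-1)*a ≤ (1-H)*x₀ := by linarith [hsge, hx₀eq]
    have h6 : 0 ≤ r i * x₀ * ((1-H)*x₀ - (2*H-1)*a) :=
      mul_nonneg (mul_nonneg hri.le hx₀.le) (by linarith)
    have h7 : H * (r i * x₀^2 - (2*H-1) * N₀)
        = r i * x₀ * ((1-H)*x₀ - (2*H-1)*a) := by
      linear_combination (2*H-1) * foc
    have hH0 : (0:ℝ) < H := by linarith
    have h8 : 0 ≤ H * (r i * x₀^2 - (2*H-1) * N₀) := by rw [h7]; exact h6
    exact nonneg_of_mul_nonneg_right h8 hH0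
  -- quadratic identity (tangency)
  have key : N₀ * ((2*H-1) * x^2 + (2-2*H) * (x₀ * x)) ≤ Nx * x₀^2 := by
    have hid : Nx * x₀^2 - N₀ * ((2*H-1) * x^2 + (2-2*H) * (x₀ * x))
        = (r i * x₀^2 - (2*H-1)*N₀) * (x - x₀)^2
          + 2*x₀*(x - x₀) * (r i * x₀^2 + r i * a * x₀ - H * N₀) := by
      rw [hN₀, hNx]; ring
    rw [foc, mul_zero, add_zero] at hid
    have h8 : 0 ≤ (r i * x₀^2 - (2*H-1)*N₀) * (x - x₀)^2 :=
      mul_nonneg hA (sq_nonneg _)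
    linarith [hid, h8]
  -- AM-GM
  have amgm : x ^ (2*H) * x₀ ^ (2-2*H) ≤ (2*H-1) * x^2 + (2-2*H) * (x₀ * x) := by
    have h := Real.geom_mean_le_arith_mean2_weighted (w₁ := 2*H-1) (w₂ := 2-2*H)
      (p₁ := x^2) (p₂ := x₀ * x) (by linarith) (by linarith) (by positivity)
      (by positivity) (by ring)
    have e1 : (x^2 : ℝ) ^ (2*H-1) = x ^ (2*(2*H-1)) := by
      rw [← Real.rpow_natCast x 2, ← Real.rpow_mul hx.le]
      norm_num
    have e2 : (x₀ * x) ^ (2-2*H) = x₀ ^ (2-2*H) * x ^ (2-2*H) :=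
      Real.mul_rpow hx₀.le hx.le
    have e3 : x ^ (2*(2*H-1)) * (x₀ ^ (2-2*H) * x ^ (2-2*H))
        = x ^ (2*H) * x₀ ^ (2-2*H) := by
      rw [mul_comm (x₀ ^ (2-2*H)) (x ^ (2-2*H)), ← mul_assoc,
        ← Real.rpow_add hx]
      ring_nf
    rw [e1, e2, e3] at h
    exact h
  have step : N₀ * (x ^ (2*H) * x₀ ^ (2-2*H)) ≤ Nx * x₀^2 :=
    le_trans (mul_le_mul_of_nonneg_left amgm hN₀pos.le) key
  have hx₀split : (x₀:ℝ)^2 = x₀ ^ (2*H) * x₀ ^ (2-2*H) := by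
    rw [← Real.rpow_add hx₀]
    norm_num
  have hpos2 : (0:ℝ) < x₀ ^ (2-2*H) := Real.rpow_pos_of_pos hx₀ _
  have main : N₀ * x ^ (2*H) ≤ Nx * x₀ ^ (2*H) := by
    have := step
    rw [hx₀split] at this
    have h' : N₀ * x ^ (2*H) * x₀ ^ (2-2*H) ≤ Nx * x₀ ^ (2*H) * x₀ ^ (2-2*H) := by
      linarith [this]
    exact le_of_mul_le_mul_right h' hpos2
  -- conclude
  have hG : 0 < Real.Gamma (2*H + 1) := Real.Gamma_pos_of_pos (by linarith)
  have hxp : (0:ℝ) < x ^ (2*H) := Real.rpow_pos_of_pos hx _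
  have hx₀p : (0:ℝ) < x₀ ^ (2*H) := Real.rpow_pos_of_pos hx₀ _
  rw [div_le_div_iff₀ (by linarith [hx₀p]) (by linarith [hxp])]
  have hN₀' : N₀ = b^2 * (q i + r i * (K i)^2) := by
    rw [hN₀, hx₀def]; ring
  have hNx' : Nx = b^2 * (q i + r i * K'^2) := by
    rw [hNx, hxdef]; ring
  rw [hN₀', hNx'] at main
  have m2 : (q i + r i * (K i)^2) * x ^ (2*H) ≤ (q i + r i * K'^2) * x₀ ^ (2*H) :=
    le_of_mul_le_mul_left (by linarith [main]) hb2
  have m3 := mul_le_mul_of_nonneg_left m2 (by positivity : (0:ℝ) ≤ 2 * Real.Gamma (2*H+1))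
  linarith [m3]
end

section
/- Let H ∈ (1/2, 1), r > 0, ε > 0 and a > 0, and define Π(η) = Γ(2H+1)·(η - (r/2)·η²) / (2·((a + η)/ε)^{2H}) for η in {η ∈ ℝ : a + η > 0}. Then the function Π attains a global maximum at the unique point η* = (-(r a + 2H - 1) + √((r a + 2H - 1)² + 4(1-H)·r·a)) / (2·(1-H)·r), and η* > 0; moreover η* is the unique root in (0, ∞) of the quadratic (1-H)·r·η² + (r a + 2H - 1)·η - a = 0. -/
set_option maxHeartbeats 1000000


/-- Best response of a producer in the Rosenblatt-driven Cournot fluctuation game: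
the payoff `Π(η) = Γ(2H+1)·(η - (r/2)η²)/(2·((a+η)/ε)^{2H})` on `{η : a + η > 0}`
attains its global maximum at the unique point
`η* = (-(ra+2H-1) + √((ra+2H-1)² + 4(1-H)ra))/(2(1-H)r)`, which is positive and is the
unique positive root of `(1-H)rη² + (ra+2H-1)η - a = 0`. -/
theorem stmt_10 (H r ε a : ℝ)
    (hH : 1/2 < H) (hH1 : H < 1) (hr : 0 < r) (hε : 0 < ε) (ha : 0 < a) :
    let P : ℝ → ℝ := fun η =>
      Real.Gamma (2*H + 1) * (η - (r/2) * η^2) / (2 * ((a + η)/ε) ^ (2*H));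
    let ηstar : ℝ :=
      (-(r*a + 2*H - 1) + Real.sqrt ((r*a + 2*H - 1)^2 + 4*(1-H)*r*a)) / (2*(1-H)*r);
    a + ηstar > 0 ∧
    (∀ η : ℝ, a + η > 0 → P η ≤ P ηstar) ∧
    (∀ η : ℝ, a + η > 0 → P η = P ηstar → η = ηstar) ∧
    0 < ηstar ∧
    (1-H) * r * ηstar^2 + (r*a + 2*H - 1) * ηstar - a = 0 ∧
    (∀ η : ℝ, 0 < η → (1-H) * r * η^2 + (r*a + 2*H - 1) * η - a = 0 → η = ηstar) := by
  intro P ηstar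
  set A : ℝ := (1-H)*r with hAdef
  set b : ℝ := r*a + 2*H - 1 with hbdef
  set s : ℝ := Real.sqrt (b^2 + 4*A*a) with hsdef
  have hA : 0 < A := mul_pos (by linarith) hr
  have hDpos : (0:ℝ) < b^2 + 4*A*a := by nlinarith [sq_nonneg b, mul_pos hA ha]
  have hs0 : 0 ≤ s := Real.sqrt_nonneg _
  have hs2 : s^2 = b^2 + 4*A*a := Real.sq_sqrt hDpos.le
  have hsb : b < s := by nlinarith [mul_pos hA ha]
  have hstar_eq : ηstar = (s - b)/(2*A) := by
    simp only [ηstar, hsdef, hbdef, hAdef]; ring_nf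
  have hstar_pos : 0 < ηstar := by
    rw [hstar_eq]
    exact div_pos (by linarith) (by linarith)
  have hroot : A*ηstar^2 + b*ηstar - a = 0 := by
    rw [hstar_eq]
    field_simp
    nlinarith [hs2]
  -- F(η) = A(η+ηstar)+b is positive for η > -a
  have hF : ∀ η : ℝ, -a < η → 0 < A*(η+ηstar) + b := by
    intro η hη
    have key : (a+ηstar)*(A*(ηstar - a)+b) = H*a*(r*a+2) := by
      simp only [hAdef, hbdef] at hroot ⊢
      linear_combination hroot
    have h1 : 0 < a + ηstar := by linarith
    have h2 : 0 < H*a*(r*a+2) := by positivity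
    have h3 : 0 < A*(ηstar - a) + b := by
      by_contra h
      push_neg at h
      nlinarith
    nlinarith
  -- q factorization
  have hq : ∀ η : ℝ, A*η^2 + b*η - a = (η - ηstar)*(A*(η+ηstar) + b) := by
    intro η; linear_combination hroot
  -- the reduced objective
  set g : ℝ → ℝ := fun η => (η - (r/2)*η^2) * (a+η) ^ (-(2*H)) with hgdef
  have hderiv : ∀ η : ℝ, -a < η →
      HasDerivAt g (-(A*η^2 + b*η - a) * (a+η) ^ (-(2*H)-1)) η := by
    intro η hη
    have h0 : 0 < a + η := by linarith
    have h1 : HasDerivAt (fun x : ℝ => x - (r/2)*x^2) (1 - r*η) η := by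
      have := (hasDerivAt_id η).sub ((hasDerivAt_pow 2 η).const_mul (r/2))
      refine this.congr_deriv ?_
      simp; ring
    have hin : HasDerivAt (fun x : ℝ => a + x) 1 η := (hasDerivAt_id η).const_add a
    have h2 : HasDerivAt (fun x : ℝ => (a+x) ^ (-(2*H)))
        (-(2*H) * (a+η) ^ (-(2*H)-1)) η := by
      have := (Real.hasDerivAt_rpow_const (x := a+η) (p := -(2*H)) (Or.inl h0.ne')).comp η hin
      simpa [Function.comp_def] using this
    have := h1.mul h2
    refine this.congr_deriv ?_
    have hr1 : (a+η) ^ (-(2*H)) = (a+η) ^ (-(2*H)-1) * (a+η) := by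
      have h := Real.rpow_add_one h0.ne' (-(2*H)-1)
      rw [show -(2*H)-1+1 = -(2*H) by ring] at h
      exact h
    rw [hr1]
    simp only [hAdef, hbdef]
    ring
  have hcont : ∀ η : ℝ, -a < η → ContinuousAt g η := fun η hη => (hderiv η hη).continuousAt
  have hstar_gt : -a < ηstar := by linarith
  -- strict mono on Ioc (-a) ηstar
  have hmono : StrictMonoOn g (Set.Ioc (-a) ηstar) := by
    apply strictMonoOn_of_deriv_pos (convex_Ioc _ _)
    · exact fun η hη => (hcont η hη.1).continuousWithinAt
    · intro η hη
      rw [interior_Ioc] at hη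
      rw [(hderiv η hη.1).deriv]
      have hqneg : A*η^2 + b*η - a < 0 := by
        rw [hq]
        exact mul_neg_of_neg_of_pos (by linarith [hη.2]) (hF η hη.1)
      have : (0:ℝ) < (a+η) ^ (-(2*H)-1) := Real.rpow_pos_of_pos (by linarith [hη.1]) _
      nlinarith
  have hanti : StrictAntiOn g (Set.Ici ηstar) := by
    apply strictAntiOn_of_deriv_neg (convex_Ici _)
    · exact fun η hη => (hcont η (by exact lt_of_lt_of_le hstar_gt hη)).continuousWithinAt
    · intro η hη
      rw [interior_Ici] at hη
      have hηgt : ηstar < η := hη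
      have hη' : -a < η := lt_trans hstar_gt hηgt
      rw [(hderiv η hη').deriv]
      have hqpos : 0 < A*η^2 + b*η - a := by
        rw [hq]
        exact mul_pos (by linarith) (hF η hη')
      have : (0:ℝ) < (a+η) ^ (-(2*H)-1) := Real.rpow_pos_of_pos (by linarith) _
      nlinarith
  have hmax : ∀ η : ℝ, -a < η → η ≠ ηstar → g η < g ηstar := by
    intro η hη hne
    rcases lt_or_gt_of_ne hne with h | h
    · exact hmono ⟨hη, h.le⟩ ⟨hstar_gt, le_refl _⟩ h
    · exact hanti (le_refl ηstar) h.le h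
  -- relate P and g
  set K : ℝ := Real.Gamma (2*H+1) * ε ^ (2*H) / 2 with hKdef
  have hK : 0 < K := by
    have := Real.Gamma_pos_of_pos (show (0:ℝ) < 2*H+1 by linarith)
    have := Real.rpow_pos_of_pos hε (2*H)
    positivity
  have hPg : ∀ η : ℝ, 0 < a + η → P η = K * g η := by
    intro η h0
    simp only [P, hKdef, hgdef]
    rw [Real.div_rpow h0.le hε.le, Real.rpow_neg h0.le]
    have h1 : (0:ℝ) < (a+η) ^ (2*H) := Real.rpow_pos_of_pos h0 _
    have h2 : (0:ℝ) < ε ^ (2*H) := Real.rpow_pos_of_pos hε _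
    generalize (a+η) ^ (2*H) = X at h1 ⊢
    generalize ε ^ (2*H) = Y at h2 ⊢
    field_simp
  have hstar0 : 0 < a + ηstar := by linarith
  refine ⟨hstar0, ?_, ?_, hstar_pos, ?_, ?_⟩
  · intro η h0
    rw [hPg η h0, hPg ηstar hstar0]
    rcases eq_or_ne η ηstar with rfl | hne
    · exact le_refl _
    · exact le_of_lt (by nlinarith [hmax η (by linarith) hne])
  · intro η h0 hPeq
    by_contra hne
    rw [hPg η h0, hPg ηstar hstar0] at hPeq
    have := hmax η (by linarith) hne
    nlinarith
  · simpa only [hAdef, hbdef] using hroot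
  · intro η hη hroot'
    have hq' : (η - ηstar)*(A*(η+ηstar) + b) = 0 := by
      rw [← hq η]; exact hroot'
    rcases mul_eq_zero.1 hq' with h | h
    · linarith
    · exact absurd h (hF η (by linarith)).ne'
end

section
/- Let I be a finite index set, H ∈ (1/2, 1), ε > 0, and for each i ∈ I let r_i > 0. Suppose (η_i)_{i∈I} are real numbers such that 1 + Σ_{j∈I} η_j > 0, a_i := 1 + Σ_{j∈I, j≠i} η_j > 0 for each i, and η_i = (-(r_i a_i + 2H - 1) + √((r_i a_i + 2H - 1)² + 4(1-H)·r_i·a_i)) / (2·(1-H)·r_i) for every i ∈ I. Then for every i ∈ I, η_i is a global maximizer of the function z ↦ Γ(2H+1)·(z - (r_i/2)·z²) / (2·((a_i + z)/ε)^{2H}) over {z ∈ ℝ : a_i + z > 0}; that is, (η_i)_{i∈I} is a Nash equilibrium of the fluctuation game in stationary linear price-feedback strategies. -/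
open Finset

set_option maxHeartbeats 1000000 in
/-- Auxiliary: the one-dimensional optimization behind the Nash fixed point. -/
theorem stmt_11_aux (H ε a R N z : ℝ)
    (hH : 1/2 < H) (hH1 : H < 1) (hε : 0 < ε) (hR0 : 0 < R)
    (haa : 0 < a) (hy : 0 < a + N)
    (hN : N = (-(R * a + 2*H - 1) +
        Real.sqrt ((R * a + 2*H - 1)^2 + 4*(1-H) * R * a)) / (2*(1-H) * R))
    (hz : a + z > 0) :
    Real.Gamma (2*H + 1) * (z - (R / 2) * z^2) / (2 * ((a + z)/ε) ^ (2*H)) ≤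
      Real.Gamma (2*H + 1) * (N - (R / 2) * N^2) / (2 * ((a + N)/ε) ^ (2*H)) := by
  have h1H : 0 < 1 - H := by linarith
  have hH0 : 0 < H := by linarith
  set B : ℝ := R * a + 2*H - 1 with hB_def
  have hB0 : 0 < B := by nlinarith
  have hD : (0:ℝ) ≤ B^2 + 4*(1-H)*R*a := by
    nlinarith [sq_nonneg B, mul_pos (mul_pos h1H hR0) haa]
  have hden : (0:ℝ) < 2*(1-H)*R := by positivity
  have hSe : Real.sqrt (B^2 + 4*(1-H)*R*a) = 2*(1-H)*R*N + B := by
    rw [hN]; field_simp; ring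
  have hS2 : (2*(1-H)*R*N + B)^2 = B^2 + 4*(1-H)*R*a := by
    rw [← hSe, Real.sq_sqrt hD]
  have hQ4 : 4*(1-H)*R * ((1-H)*R*N^2 + B*N - a) = 0 := by linear_combination hS2
  have hQ : (1-H)*R*N^2 + B*N - a = 0 := by
    rcases mul_eq_zero.1 hQ4 with h | h
    · exfalso; nlinarith
    · exact h
  have hSlt : Real.sqrt (B^2 + 4*(1-H)*R*a) < 1 + R*a := by
    rw [Real.sqrt_lt' (by nlinarith)]
    nlinarith [sq_nonneg (2*H - 1), mul_pos hR0 haa]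
  have hRN : R * N < 1 := by
    rw [hSe] at hSlt; nlinarith
  have hx : 0 < a + z := hz
  have htan : (1 - R*N) * (a + N) = 2*H*(N - R/2*N^2) := by linear_combination -hQ
  have hgη0 : 0 < N - R/2*N^2 := by
    nlinarith [mul_pos (by linarith : (0:ℝ) < 1 - R*N) hy]
  have hs : -1 ≤ (z - N)/(a + N) := by
    rw [le_div_iff₀ hy]; linarith
  have hbern : 1 + (2*H)*((z - N)/(a + N)) ≤ (1 + (z - N)/(a + N)) ^ (2*H) :=
    one_add_mul_self_le_rpow_one_add hs (by linarith)
  have hxy : 1 + (z - N)/(a + N) = (a + z)/(a + N) := by field_simp; ring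
  have hkey : z - R/2*z^2 ≤ (N - R/2*N^2) * (1 + (2*H)*((z - N)/(a + N))) := by
    have hsy : (z - N)/(a + N) * (a + N) = z - N := div_mul_cancel₀ _ hy.ne'
    have hid : (N - R/2*N^2) * (1 + (2*H)*((z - N)/(a + N))) * (a + N)
        = (z - R/2*z^2) * (a + N) + R/2 * (a + N) * (z - N)^2 := by
      linear_combination (2*H*(N - R/2*N^2)) * hsy - (z - N) * htan
    have hge : (z - R/2*z^2) * (a + N)
        ≤ (N - R/2*N^2) * (1 + (2*H)*((z - N)/(a + N))) * (a + N) := by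
      rw [hid]
      have h0 : 0 ≤ R/2 * (a + N) * (z - N)^2 := by positivity
      linarith
    exact le_of_mul_le_mul_right hge hy
  have hmain : z - R/2*z^2 ≤ (N - R/2*N^2) * ((a + z)/(a + N)) ^ (2*H) := by
    calc z - R/2*z^2 ≤ (N - R/2*N^2) * (1 + (2*H)*((z - N)/(a + N))) := hkey
    _ ≤ (N - R/2*N^2) * (1 + (z - N)/(a + N)) ^ (2*H) :=
        mul_le_mul_of_nonneg_left hbern hgη0.le
    _ = (N - R/2*N^2) * ((a + z)/(a + N)) ^ (2*H) := by rw [hxy]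
  have hXp : (0:ℝ) < ((a + z)/ε) ^ (2*H) := Real.rpow_pos_of_pos (by positivity) _
  have hYp : (0:ℝ) < ((a + N)/ε) ^ (2*H) := Real.rpow_pos_of_pos (by positivity) _
  have hC : (0:ℝ) < Real.Gamma (2*H + 1) := Real.Gamma_pos_of_pos (by linarith)
  have hsplit : ((a + z)/ε) ^ (2*H) = ((a + z)/(a + N)) ^ (2*H) * ((a + N)/ε) ^ (2*H) := by
    rw [← Real.mul_rpow (by positivity) (by positivity)]
    congr 1
    field_simp
  have hfin : (z - R/2*z^2) * (((a + N)/ε) ^ (2*H))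
      ≤ (N - R/2*N^2) * (((a + z)/ε) ^ (2*H)) := by
    rw [hsplit, ← mul_assoc]
    exact mul_le_mul_of_nonneg_right hmain hYp.le
  rw [div_le_div_iff₀ (by positivity) (by positivity)]
  calc Real.Gamma (2*H+1) * (z - R/2*z^2) * (2 * ((a + N)/ε) ^ (2*H))
      = 2 * Real.Gamma (2*H+1) * ((z - R/2*z^2) * ((a + N)/ε) ^ (2*H)) := by ring
    _ ≤ 2 * Real.Gamma (2*H+1) * ((N - R/2*N^2) * ((a + z)/ε) ^ (2*H)) :=
        mul_le_mul_of_nonneg_left hfin (by positivity)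
    _ = Real.Gamma (2*H+1) * (N - R/2*N^2) * (2 * ((a + z)/ε) ^ (2*H)) := by ring

/-- Nash equilibrium fixed point of the Rosenblatt-driven Cournot fluctuation game:
if the gains `η i` satisfy the stated fixed-point system with `aᵢ = 1 + Σ_{j≠i} ηⱼ > 0`
and `1 + Σⱼ ηⱼ > 0`, then each `η i` globally maximizes
`z ↦ Γ(2H+1)·(z - (rᵢ/2)z²)/(2·((aᵢ+z)/ε)^{2H})` over `{z : aᵢ + z > 0}`. -/
theorem stmt_11 {I : Type*} [Fintype I] [DecidableEq I]
    (H ε : ℝ) (r η : I → ℝ)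
    (hH : 1/2 < H) (hH1 : H < 1) (hε : 0 < ε) (hr : ∀ i, 0 < r i)
    (hstab : 0 < 1 + ∑ j, η j)
    (ha : ∀ i, 0 < 1 + ∑ j ∈ univ.erase i, η j)
    (hfix : ∀ i, η i =
      (-(r i * (1 + ∑ j ∈ univ.erase i, η j) + 2*H - 1) +
          Real.sqrt ((r i * (1 + ∑ j ∈ univ.erase i, η j) + 2*H - 1)^2 +
            4*(1-H) * r i * (1 + ∑ j ∈ univ.erase i, η j))) / (2*(1-H) * r i)) :
    ∀ i, ∀ z : ℝ,
      (1 + ∑ j ∈ univ.erase i, η j) + z > 0 →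
      Real.Gamma (2*H + 1) * (z - (r i / 2) * z^2) /
          (2 * (((1 + ∑ j ∈ univ.erase i, η j) + z)/ε) ^ (2*H)) ≤
        Real.Gamma (2*H + 1) * (η i - (r i / 2) * (η i)^2) /
          (2 * (((1 + ∑ j ∈ univ.erase i, η j) + η i)/ε) ^ (2*H)) := by
  intro i z hz
  have hsum : (∑ j ∈ univ.erase i, η j) + η i = ∑ j, η j :=
    Finset.sum_erase_add univ η (mem_univ i)
  have hy : 0 < (1 + ∑ j ∈ univ.erase i, η j) + η i := by linarith
  exact stmt_11_aux H ε _ (r i) (η i) z hH hH1 hε (hr i) (ha i) hy (hfix i) hz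
end

section
/- Let (Ω, ℱ, ℙ) be a probability space, let p be a square-integrable real random variable, and let r > 0, r̄ > 0, c ∈ ℝ. For a square-integrable real random variable u define the payoff J(u) = E[p·u] - c·E[u] - (r/2)·E[u²] - (r̄/2)·(E[u])². Then for every square-integrable u, J(u) ≤ Var(p)/(2r) + (E[p] - c)²/(2(r + r̄)), and equality holds if and only if u = (p - E[p])/r + (E[p] - c)/(r + r̄) almost surely. -/
open MeasureTheory ProbabilityTheory

section aux
variable {Ω : Type*} [MeasurableSpace Ω] {μ : Measure Ω}

lemma aux_int_mul {f g : Ω → ℝ} (hf : MemLp f 2 μ) (hg : MemLp g 2 μ) :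
    Integrable (fun ω => f ω * g ω) μ := by
  have h := (((hf.add hg).integrable_sq.sub hf.integrable_sq).sub hg.integrable_sq).const_mul
    (1/2 : ℝ)
  convert h using 1
  funext ω
  simp only [Pi.sub_apply, Pi.add_apply]
  ring
end aux

set_option maxHeartbeats 1000000 in
/-- Best response of a producer in the variance-aware MFTG with random market price `p`:
for every square-integrable supply `u`, the payoff
`E[p·u] - c·E[u] - (r/2)·E[u²] - (r̄/2)·(E[u])²` is at most
`Var(p)/(2r) + (E[p]-c)²/(2(r+r̄))`, with equality iff
`u = (p - E[p])/r + (E[p]-c)/(r+r̄)` almost surely. -/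
theorem stmt_14 {Ω : Type*} [MeasurableSpace Ω] (μ : Measure Ω) [IsProbabilityMeasure μ]
    (p : Ω → ℝ) (hp : MemLp p 2 μ) (r rbar c : ℝ) (hr : 0 < r) (hrbar : 0 < rbar) :
    ∀ u : Ω → ℝ, MemLp u 2 μ →
      ((∫ ω, p ω * u ω ∂μ) - c * (∫ ω, u ω ∂μ) - (r/2) * (∫ ω, (u ω)^2 ∂μ)
          - (rbar/2) * (∫ ω, u ω ∂μ)^2
        ≤ variance p μ / (2*r) + ((∫ ω, p ω ∂μ) - c)^2 / (2*(r + rbar))) ∧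
      ((∫ ω, p ω * u ω ∂μ) - c * (∫ ω, u ω ∂μ) - (r/2) * (∫ ω, (u ω)^2 ∂μ)
          - (rbar/2) * (∫ ω, u ω ∂μ)^2
        = variance p μ / (2*r) + ((∫ ω, p ω ∂μ) - c)^2 / (2*(r + rbar))
        ↔ u =ᵐ[μ] fun ω =>
            (p ω - ∫ ω', p ω' ∂μ) / r + ((∫ ω', p ω' ∂μ) - c) / (r + rbar)) := by
  intro u hu
  have hr' : r ≠ 0 := ne_of_gt hr
  have hrr0 : (0:ℝ) < r + rbar := by linarith
  have hrr : r + rbar ≠ 0 := ne_of_gt hrr0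
  -- integrability facts
  have hpi : Integrable p μ := hp.integrable one_le_two
  have hui : Integrable u μ := hu.integrable one_le_two
  have hp2 : Integrable (fun ω => (p ω)^2) μ := hp.integrable_sq
  have hu2 : Integrable (fun ω => (u ω)^2) μ := hu.integrable_sq
  have hpu : Integrable (fun ω => p ω * u ω) μ := aux_int_mul hp hu
  -- opaque constants
  obtain ⟨A, hA⟩ : ∃ A : ℝ, (∫ ω, p ω ∂μ) = A := ⟨_, rfl⟩
  obtain ⟨U, hU⟩ : ∃ U : ℝ, (∫ ω, u ω ∂μ) = U := ⟨_, rfl⟩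
  obtain ⟨B, hB⟩ : ∃ B : ℝ, (∫ ω, (p ω)^2 ∂μ) = B := ⟨_, rfl⟩
  obtain ⟨W, hW⟩ : ∃ W : ℝ, (∫ ω, (u ω)^2 ∂μ) = W := ⟨_, rfl⟩
  obtain ⟨X, hX⟩ : ∃ X : ℝ, (∫ ω, p ω * u ω ∂μ) = X := ⟨_, rfl⟩
  have hvar : variance p μ = B - A^2 := by
    rw [variance_eq_sub hp]
    simp only [Pi.pow_apply]
    rw [hB, hA]
  rw [hvar, hA, hU, hW, hX]
  obtain ⟨star, hstar⟩ : ∃ f : Ω → ℝ, f = fun ω => (p ω - A) / r + (A - c) / (r + rbar) :=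
    ⟨_, rfl⟩
  rw [← hstar]
  have hstarfe : star = fun ω => (1/r) * p ω + ((A - c)/(r+rbar) - A/r) := by
    funext ω; rw [hstar]; field_simp; ring
  have hstarmem : MemLp star 2 μ := by
    rw [hstarfe]; exact (hp.const_mul (1/r)).add (memLp_const _)
  have hd2 : Integrable (fun ω => (u ω - star ω)^2) μ := (hu.sub hstarmem).integrable_sq
  -- value of ∫ star
  have hstarint : ∫ ω, star ω ∂μ = (A - c)/(r+rbar) := by
    rw [hstarfe, integral_add (hpi.const_mul _) (integrable_const _), integral_const_mul,
      integral_const]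
    rw [hA]; simp [measure_univ]; ring
  -- value of D
  obtain ⟨s, hs⟩ : ∃ s : ℝ, s = A/r - (A - c)/(r+rbar) := ⟨_, rfl⟩
  have hexp : (fun ω => (u ω - star ω)^2)
      = fun ω => (((u ω)^2 + (1/r^2) * (p ω)^2) + ((-(2/r)) * (p ω * u ω) + (2*s) * u ω))
          + ((-(2*s/r)) * p ω + s^2) := by
    funext ω
    rw [hstar, hs]
    field_simp
    ring
  have i2 : Integrable (fun ω => (1/r^2) * (p ω)^2) μ := hp2.const_mul _
  have i3 : Integrable (fun ω => (-(2/r)) * (p ω * u ω)) μ := hpu.const_mul _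
  have i4 : Integrable (fun ω => (2*s) * u ω) μ := hui.const_mul _
  have i5 : Integrable (fun ω => (-(2*s/r)) * p ω) μ := hpi.const_mul _
  have i12 : Integrable (fun ω => (u ω)^2 + (1/r^2) * (p ω)^2) μ := hu2.add i2
  have i34 : Integrable (fun ω => (-(2/r)) * (p ω * u ω) + (2*s) * u ω) μ := i3.add i4
  have i56 : Integrable (fun ω => (-(2*s/r)) * p ω + s^2) μ := i5.add (integrable_const _)
  have i1234 : Integrable (fun ω => ((u ω)^2 + (1/r^2) * (p ω)^2)
      + ((-(2/r)) * (p ω * u ω) + (2*s) * u ω)) μ := i12.add i34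
  have hDval : ∫ ω, (u ω - star ω)^2 ∂μ
      = W + (1/r^2)*B - (2/r)*X + 2*s*U - 2*s*A/r + s^2 := by
    rw [hexp, integral_add i1234 i56, integral_add i12 i34, integral_add hu2 i2,
      integral_add i3 i4, integral_add i5 (integrable_const _),
      integral_const_mul, integral_const_mul, integral_const_mul, integral_const_mul,
      integral_const]
    rw [hA, hU, hB, hW, hX]
    simp [measure_univ]
    ring
  have hDnn : 0 ≤ ∫ ω, (u ω - star ω)^2 ∂μ := integral_nonneg fun ω => sq_nonneg _
  -- key identity
  have key : X - c*U - (r/2)*W - (rbar/2)*U^2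
      = (B - A^2)/(2*r) + (A - c)^2/(2*(r+rbar)) - (r/2)*(∫ ω, (u ω - star ω)^2 ∂μ)
        - (rbar/2)*(U - (A - c)/(r+rbar))^2 := by
    rw [hDval, hs]
    field_simp
    ring
  refine ⟨?_, ?_, ?_⟩
  · nlinarith [sq_nonneg (U - (A - c)/(r+rbar)), hDnn, hr.le, hrbar.le]
  · intro heq
    have hzero : (r/2)*(∫ ω, (u ω - star ω)^2 ∂μ)
        + (rbar/2)*(U - (A - c)/(r+rbar))^2 = 0 := by linarith [key, heq]
    have hD0 : ∫ ω, (u ω - star ω)^2 ∂μ = 0 := by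
      nlinarith [sq_nonneg (U - (A - c)/(r+rbar))]
    have hae0 := (integral_eq_zero_iff_of_nonneg (fun ω => sq_nonneg (u ω - star ω)) hd2).mp hD0
    filter_upwards [hae0] with ω hω
    have h1 : (u ω - star ω)^2 = 0 := hω
    have h2 : u ω - star ω = 0 := by
      exact pow_eq_zero_iff (by norm_num : (2:ℕ) ≠ 0) |>.mp h1
    have h3 : u ω = star ω := by linarith [h2]
    exact h3
  · intro hae
    have hae' : (fun ω => (u ω - star ω)^2) =ᵐ[μ] (fun _ => (0:ℝ)) := by
      filter_upwards [hae] with ω hω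
      have : u ω = star ω := hω
      simp [this]
    have hD0 : ∫ ω, (u ω - star ω)^2 ∂μ = 0 := by
      rw [integral_congr_ae hae']; simp
    have hUk : U = (A - c)/(r+rbar) := by
      rw [← hU, integral_congr_ae hae, hstarint]
    rw [key, hD0, hUk]
    ring
end

section
/- Let (Ω, ℱ, ℙ) be a probability space, let p be a square-integrable real random variable, and let r > 0, r̄ > 0, c ∈ ℝ. Then the payoff of the mean-field-game (price-taking) strategy u = (p - c)/r equals J((p - c)/r) = Var(p)/(2r) + ((r - r̄)/(2r²))·(E[p] - c)², and the gap between the MFTG optimal value and this payoff equals [Var(p)/(2r) + (E[p] - c)²/(2(r + r̄))] - J((p - c)/r) = r̄²·(E[p] - c)²/(2·r²·(r + r̄)), which is nonnegative. -/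
open MeasureTheory ProbabilityTheory

/-- Price of simplicity: the payoff of the price-taking (frozen mean-field) strategy
`u = (p - c)/r` equals `Var(p)/(2r) + ((r - r̄)/(2r²))·(E[p]-c)²`, and its shortfall
from the MFTG optimal value `Var(p)/(2r) + (E[p]-c)²/(2(r+r̄))` equals
`r̄²·(E[p]-c)²/(2r²(r+r̄))`, which is nonnegative. -/
theorem stmt_16 {Ω : Type*} [MeasurableSpace Ω] (μ : Measure Ω) [IsProbabilityMeasure μ]
    (p : Ω → ℝ) (hp : MemLp p 2 μ) (r rbar c : ℝ) (hr : 0 < r) (hrbar : 0 < rbar) :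
    let u : Ω → ℝ := fun ω => (p ω - c) / r;
    let J : ℝ := (∫ ω, p ω * u ω ∂μ) - c * (∫ ω, u ω ∂μ) - (r/2) * (∫ ω, (u ω)^2 ∂μ)
        - (rbar/2) * (∫ ω, u ω ∂μ)^2;
    J = variance p μ / (2*r) + ((r - rbar)/(2*r^2)) * ((∫ ω, p ω ∂μ) - c)^2 ∧
    (variance p μ / (2*r) + ((∫ ω, p ω ∂μ) - c)^2 / (2*(r + rbar))) - J
      = rbar^2 * ((∫ ω, p ω ∂μ) - c)^2 / (2 * r^2 * (r + rbar)) ∧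
    0 ≤ (variance p μ / (2*r) + ((∫ ω, p ω ∂μ) - c)^2 / (2*(r + rbar))) - J := by
  intro u J
  have hp1 : Integrable p μ := hp.integrable one_le_two
  have hp2 : Integrable (fun ω => p ω ^ 2) μ :=
    (memLp_two_iff_integrable_sq hp.1).mp hp
  set m := ∫ ω, p ω ∂μ with hm
  set s := ∫ ω, p ω ^ 2 ∂μ with hs
  have hvar : variance p μ = s - m ^ 2 := by
    rw [variance_eq_sub hp]; simp [hm, hs, sq]
  have h1 : (∫ ω, u ω ∂μ) = (m - c) / r := by
    simp only [u, div_eq_mul_inv]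
    rw [integral_mul_const, integral_sub hp1 (integrable_const c), integral_const]
    simp [hm]
  have h2 : (∫ ω, p ω * u ω ∂μ) = (s - c * m) / r := by
    have : ∀ ω, p ω * u ω = (p ω ^ 2 - c * p ω) * r⁻¹ := by
      intro ω; simp only [u]; field_simp
    simp only [this]
    rw [integral_mul_const, integral_sub hp2 (hp1.const_mul c), integral_const_mul]
    simp [hm, hs, div_eq_mul_inv]
  have h3 : (∫ ω, (u ω)^2 ∂μ) = (s - 2*c*m + c^2) / r^2 := by
    have : ∀ ω, (u ω)^2 = (p ω ^ 2 - 2*c * p ω + c^2) * (r^2)⁻¹ := by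
      intro ω; simp only [u]; field_simp; ring
    simp only [this]
    have hsub : Integrable (fun a => p a ^ 2 - 2*c*p a) μ := hp2.sub (hp1.const_mul (2*c))
    rw [integral_mul_const, integral_add hsub (integrable_const _),
      integral_sub hp2 (hp1.const_mul (2*c)), integral_const_mul, integral_const]
    simp [hm, hs, div_eq_mul_inv]
  have hJ : J = (s - c*m)/r - c*((m-c)/r) - (r/2)*((s - 2*c*m + c^2)/r^2)
      - (rbar/2)*((m-c)/r)^2 := by
    simp only [J, h1, h2, h3]
  have hr' : r ≠ 0 := hr.ne'
  have hrr : r + rbar ≠ 0 := by positivity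
  have key1 : J = variance p μ / (2*r) + ((r - rbar)/(2*r^2)) * (m - c)^2 := by
    rw [hJ, hvar]; field_simp; ring
  refine ⟨key1, ?_, ?_⟩
  · rw [key1]; field_simp; ring
  · rw [key1]
    have : variance p μ / (2*r) + (m - c)^2 / (2*(r + rbar)) -
        (variance p μ / (2*r) + ((r - rbar)/(2*r^2)) * (m - c)^2)
        = rbar^2 * (m - c)^2 / (2 * r^2 * (r + rbar)) := by field_simp; ring
    rw [this]; positivity
end
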